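/- Let x > 0 be real and let n ≥ m ≥ 1 be natural numbers. With b_k = Σ_{j=1}^k j x^j and c_k = Σ_{j=1}^k j² x^j, one has b_n c_m ≤ b_m c_n. -/

import Mathlib

open Finset

/-- `bP k x = ∑_{j=1}^k j x^j` -/
noncomputable def bP (k : ℕ) (x : ℝ) : ℝ := ∑ j ∈ range (k + 1), (j : ℝ) * x ^ j

/-- `cP k x = ∑_{j=1}^k j² x^j` -/
noncomputable def cP (k : ℕ) (x : ℝ) : ℝ := ∑ j ∈ range (k + 1), (j : ℝ) ^ 2 * x ^ j

lemma cP_le_mul_bP (x : ℝ) (hx : 0 ≤ x) (m K : ℕ) (hmK : m ≤ K) :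
    cP m x ≤ (K : ℝ) * bP m x := by
  unfold cP bP
  rw [Finset.mul_sum]
  apply Finset.sum_le_sum
  intro j hj
  have hjm : j ≤ K := le_trans (Nat.lt_succ_iff.mp (Finset.mem_range.mp hj)) hmK
  have h1 : (j : ℝ) ^ 2 ≤ (K : ℝ) * j := by
    have : (j : ℝ) ≤ K := by exact_mod_cast hjm
    nlinarith [Nat.cast_nonneg (α := ℝ) j]
  have h2 : (0:ℝ) ≤ x ^ j := pow_nonneg hx j
  calc (j : ℝ) ^ 2 * x ^ j ≤ ((K : ℝ) * j) * x ^ j := by nlinarith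
    _ = (K : ℝ) * ((j : ℝ) * x ^ j) := by ring

lemma bP_nonneg (x : ℝ) (hx : 0 ≤ x) (k : ℕ) : 0 ≤ bP k x := by
  unfold bP
  apply Finset.sum_nonneg
  intro j _
  positivity

/-- For `x > 0` and `n ≥ m ≥ 1`, one has `bₙ cₘ ≤ bₘ cₙ`. -/
theorem bn_cm_le_bm_cn (x : ℝ) (hx : 0 < x) (n m : ℕ) (hm : 1 ≤ m) (hnm : m ≤ n) :
    bP n x * cP m x ≤ bP m x * cP n x := by
  induction n, hnm using Nat.le_induction with
  | base => exact le_refl _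
  | succ n hmn ih =>
    have hb : bP (n+1) x = bP n x + ((n:ℝ)+1) * x ^ (n+1) := by
      unfold bP; rw [Finset.sum_range_succ]; push_cast; ring
    have hc : cP (n+1) x = cP n x + ((n:ℝ)+1)^2 * x ^ (n+1) := by
      unfold cP; rw [Finset.sum_range_succ]; push_cast; ring
    have key : cP m x ≤ ((n:ℝ)+1) * bP m x := by
      have := cP_le_mul_bP x hx.le m (n+1) (le_trans hmn (Nat.le_succ n))
      push_cast at this
      linarith
    have hpow : (0:ℝ) ≤ x ^ (n+1) := (pow_pos hx _).le
    have hn1 : (0:ℝ) ≤ (n:ℝ)+1 := by positivity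
    have hmul : ((n:ℝ)+1) * x ^ (n+1) * cP m x ≤ ((n:ℝ)+1)^2 * x ^ (n+1) * bP m x := by
      have := mul_le_mul_of_nonneg_left key (mul_nonneg hn1 hpow)
      nlinarith [this]
    rw [hb, hc]
    nlinarith [ih]
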